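/- Let Z ~ ESN_k(0, Ω̄, α, τ), with T = α₀ + αᵀZ where α₀ = τ√(1+αᵀΩ̄α). Then E[T·ζ₁(T)] = (α₀ − τ·αᵀδ)·ζ₁(τ)/√(1+αᵀΩ̄α), where δ = Ω̄α/√(1+αᵀΩ̄α) and ζ₁(x) = φ(x)/Φ(x). -/

import Mathlib

open Matrix MeasureTheory Real

noncomputable def phi (x : ℝ) : ℝ := (Real.sqrt (2 * Real.pi))⁻¹ * Real.exp (-x ^ 2 / 2)

noncomputable def Phi (x : ℝ) : ℝ := ∫ t in Set.Iic x, phi t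

noncomputable def zeta1 (x : ℝ) : ℝ := phi x / Phi x

/-- Density of `N_k(0, Ω)`. -/
noncomputable def gaussPdf {k : ℕ} (Ω : Matrix (Fin k) (Fin k) ℝ) (z : Fin k → ℝ) : ℝ :=
  (2 * Real.pi) ^ (-(k : ℝ) / 2) * Ω.det ^ (-(1 : ℝ) / 2) *
    Real.exp (-(1 / 2) * (z ⬝ᵥ Ω⁻¹ *ᵥ z))

/-- Density of `ESN_k(0, Ω̄, α, τ)`. -/
noncomputable def esnPdf {k : ℕ} (Ωb : Matrix (Fin k) (Fin k) ℝ) (α : Fin k → ℝ) (τ : ℝ)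
    (z : Fin k → ℝ) : ℝ :=
  gaussPdf Ωb z * Phi (τ * Real.sqrt (1 + α ⬝ᵥ Ωb *ᵥ α) + α ⬝ᵥ z) / Phi τ

/-! ### Auxiliary one-dimensional facts -/

lemma gauss_eq : (fun x : ℝ => Real.exp (-x ^ 2 / 2)) = fun x => Real.exp (-(1/2 : ℝ) * x ^ 2) := by
  funext x; congr 1; ring

lemma integrable_gauss1 : Integrable (fun x : ℝ => Real.exp (-x ^ 2 / 2)) := by
  rw [gauss_eq]; exact integrable_exp_neg_mul_sq (by norm_num)

lemma integral_gauss1 : ∫ x : ℝ, Real.exp (-x ^ 2 / 2) = Real.sqrt (2 * Real.pi) := by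
  rw [gauss_eq, integral_gaussian]
  rw [show Real.pi / (1/2) = 2 * Real.pi by ring]

lemma integrable_mul_gauss1 : Integrable (fun x : ℝ => x * Real.exp (-x ^ 2 / 2)) := by
  have h : (fun x : ℝ => x * Real.exp (-x ^ 2 / 2))
      = fun x => x * Real.exp (-(1/2 : ℝ) * x ^ 2) := by funext x; congr 2; ring
  rw [h]; exact integrable_mul_exp_neg_mul_sq (by norm_num)

lemma phi_pos (x : ℝ) : 0 < phi x := by
  have : (0:ℝ) < Real.sqrt (2 * Real.pi) := Real.sqrt_pos.2 (by positivity)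
  unfold phi; positivity

lemma integrable_phi : Integrable phi := by
  unfold phi; exact integrable_gauss1.const_mul _

lemma Phi_pos (x : ℝ) : 0 < Phi x := by
  unfold Phi
  rw [setIntegral_pos_iff_support_of_nonneg_ae]
  · have h : Function.support phi = Set.univ := by
      ext t; simp [Function.mem_support, (phi_pos t).ne']
    rw [h, Set.univ_inter]
    simp [Real.volume_Iic]
  · exact Filter.Eventually.of_forall fun t => (phi_pos t).le
  · exact integrable_phi.integrableOn

/-! ### Standard Gaussian integrals on `Fin k → ℝ` -/

variable {k : ℕ}

lemma std_exp_prod (y : Fin k → ℝ) :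
    Real.exp (-(1/2 : ℝ) * (y ⬝ᵥ y)) = ∏ i, Real.exp (-(y i) ^ 2 / 2) := by
  rw [← Real.exp_sum]
  congr 1
  rw [dotProduct, Finset.mul_sum]
  exact Finset.sum_congr rfl fun i _ => by ring

lemma integrable_std_prod :
    Integrable (fun y : Fin k → ℝ => ∏ i, Real.exp (-(y i) ^ 2 / 2)) :=
  Integrable.fintype_prod fun _ => integrable_gauss1

lemma coord_prod_eq (j : Fin k) (y : Fin k → ℝ) :
    (∏ i, (if i = j then (fun x : ℝ => x * Real.exp (-x ^ 2 / 2))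
        else (fun x : ℝ => Real.exp (-x ^ 2 / 2))) (y i))
      = y j * ∏ i, Real.exp (-(y i) ^ 2 / 2) := by
  classical
  rw [← Finset.mul_prod_erase Finset.univ
        (fun i => (if i = j then (fun x : ℝ => x * Real.exp (-x ^ 2 / 2))
          else (fun x : ℝ => Real.exp (-x ^ 2 / 2))) (y i)) (Finset.mem_univ j),
      ← Finset.mul_prod_erase Finset.univ
        (fun i => Real.exp (-(y i) ^ 2 / 2)) (Finset.mem_univ j)]
  have herase : ∏ i ∈ Finset.univ.erase j,
      (if i = j then (fun x : ℝ => x * Real.exp (-x ^ 2 / 2))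
        else (fun x : ℝ => Real.exp (-x ^ 2 / 2))) (y i)
      = ∏ i ∈ Finset.univ.erase j, Real.exp (-(y i) ^ 2 / 2) :=
    Finset.prod_congr rfl fun i hi => by
      rw [if_neg (Finset.mem_erase.1 hi).1]
  rw [herase, if_pos rfl]
  ring

lemma integrable_coord_prod (j : Fin k) :
    Integrable (fun y : Fin k → ℝ => y j * ∏ i, Real.exp (-(y i) ^ 2 / 2)) := by
  classical
  have hint : Integrable (fun y : Fin k → ℝ =>
      ∏ i, (if i = j then (fun x : ℝ => x * Real.exp (-x ^ 2 / 2))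
        else (fun x : ℝ => Real.exp (-x ^ 2 / 2))) (y i)) := by
    refine Integrable.fintype_prod fun i => ?_
    by_cases h : i = j
    · rw [if_pos h]; exact integrable_mul_gauss1
    · rw [if_neg h]; exact integrable_gauss1
  exact hint.congr (Filter.Eventually.of_forall fun y => coord_prod_eq j y)

lemma lin_split (γ : Fin k → ℝ) (y : Fin k → ℝ) :
    (γ ⬝ᵥ y) * Real.exp (-(1/2 : ℝ) * (y ⬝ᵥ y))
      = ∑ j, γ j * (y j * ∏ i, Real.exp (-(y i) ^ 2 / 2)) := by
  rw [std_exp_prod, dotProduct, Finset.sum_mul]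
  exact Finset.sum_congr rfl fun j _ => by ring

lemma std_split (C : ℝ) (γ : Fin k → ℝ) (y : Fin k → ℝ) :
    (C + γ ⬝ᵥ y) * Real.exp (-(1/2 : ℝ) * (y ⬝ᵥ y))
      = C * (∏ i, Real.exp (-(y i) ^ 2 / 2))
        + ∑ j, γ j * (y j * ∏ i, Real.exp (-(y i) ^ 2 / 2)) := by
  rw [add_mul, lin_split, std_exp_prod]

lemma integral_lin_std_gauss (γ : Fin k → ℝ) :
    ∫ y : Fin k → ℝ, (γ ⬝ᵥ y) * Real.exp (-(1/2 : ℝ) * (y ⬝ᵥ y)) = 0 := by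
  have h := integral_neg_eq_self
    (fun y : Fin k → ℝ => (γ ⬝ᵥ y) * Real.exp (-(1/2 : ℝ) * (y ⬝ᵥ y))) volume
  have h2 : ∀ y : Fin k → ℝ, (γ ⬝ᵥ (-y)) * Real.exp (-(1/2 : ℝ) * ((-y) ⬝ᵥ (-y)))
      = -((γ ⬝ᵥ y) * Real.exp (-(1/2 : ℝ) * (y ⬝ᵥ y))) := by
    intro y
    rw [dotProduct_neg, neg_dotProduct, dotProduct_neg, neg_neg, neg_mul]
  simp only [h2, integral_neg] at h
  linarith

lemma integral_std_gauss (C : ℝ) (γ : Fin k → ℝ) :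
    ∫ y : Fin k → ℝ, (C + γ ⬝ᵥ y) * Real.exp (-(1/2 : ℝ) * (y ⬝ᵥ y))
      = C * Real.sqrt (2 * Real.pi) ^ k := by
  have h1 : Integrable (fun y : Fin k → ℝ => C * ∏ i, Real.exp (-(y i) ^ 2 / 2)) :=
    integrable_std_prod.const_mul C
  have h2 : Integrable (fun y : Fin k → ℝ =>
      ∑ j, γ j * (y j * ∏ i, Real.exp (-(y i) ^ 2 / 2))) :=
    integrable_finset_sum _ fun j _ => (integrable_coord_prod j).const_mul (γ j)
  calc ∫ y : Fin k → ℝ, (C + γ ⬝ᵥ y) * Real.exp (-(1/2 : ℝ) * (y ⬝ᵥ y))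
      = ∫ y : Fin k → ℝ, (C * (∏ i, Real.exp (-(y i) ^ 2 / 2))
          + ∑ j, γ j * (y j * ∏ i, Real.exp (-(y i) ^ 2 / 2))) := by
        simp only [std_split]
    _ = (∫ y : Fin k → ℝ, C * ∏ i, Real.exp (-(y i) ^ 2 / 2))
          + ∫ y : Fin k → ℝ, ∑ j, γ j * (y j * ∏ i, Real.exp (-(y i) ^ 2 / 2)) :=
        integral_add h1 h2
    _ = C * Real.sqrt (2 * Real.pi) ^ k + 0 := by
        congr 1
        · rw [integral_const_mul]
          congr 1
          rw [volume_pi, integral_fintype_prod_eq_pow (ι := Fin k) (fun x : ℝ => Real.exp (-x ^ 2 / 2)),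
            integral_gauss1]
          simp
        · rw [← integral_lin_std_gauss γ]
          exact integral_congr_ae (Filter.Eventually.of_forall fun y => (lin_split γ y).symm)
    _ = C * Real.sqrt (2 * Real.pi) ^ k := add_zero _

/-! ### Gaussian integral for a positive definite quadratic form -/

open scoped MatrixOrder in
lemma gauss_quad_integral (M : Matrix (Fin k) (Fin k) ℝ) (hM : M.PosDef) (C : ℝ)
    (β : Fin k → ℝ) :
    ∫ w : Fin k → ℝ, (C + β ⬝ᵥ w) * Real.exp (-(1/2 : ℝ) * (w ⬝ᵥ M *ᵥ w))
      = C * Real.sqrt (2 * Real.pi) ^ k * (Real.sqrt M.det)⁻¹ := by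
  classical
  set B := CFC.sqrt M with hBdef
  have hBB : B * B = M := CFC.sqrt_mul_sqrt_self M hM.posSemidef.nonneg
  have hBsymm : Bᵀ = B := by
    have h := (CFC.sqrt_nonneg M).posSemidef.1
    rwa [Matrix.IsHermitian, conjTranspose_eq_transpose_of_trivial] at h
  have hdetM : 0 < M.det := hM.det_pos
  have hdetB2 : B.det * B.det = M.det := by rw [← det_mul, hBB]
  have hdetB_nonneg : 0 ≤ B.det := by
    have hh := (CFC.sqrt_nonneg M).posSemidef
    rw [hh.1.det_eq_prod_eigenvalues]
    exact Finset.prod_nonneg fun i _ => hh.eigenvalues_nonneg i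
  have hdetB_pos : 0 < B.det := by
    rcases hdetB_nonneg.lt_or_eq with h | h
    · exact h
    · exfalso; rw [← h] at hdetB2; simp at hdetB2; rw [← hdetB2] at hdetM; simp at hdetM
  have hdetB_ne : B.det ≠ 0 := hdetB_pos.ne'
  have hsqrtdet : Real.sqrt M.det = B.det := by
    rw [← hdetB2, Real.sqrt_mul_self hdetB_nonneg]
  have hBinv : B * B⁻¹ = 1 := mul_nonsing_inv B (isUnit_iff_ne_zero.2 hdetB_ne)
  set γ : Fin k → ℝ := B⁻¹ *ᵥ β with hγ
  set g : (Fin k → ℝ) → ℝ :=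
    fun y => (C + γ ⬝ᵥ y) * Real.exp (-(1/2 : ℝ) * (y ⬝ᵥ y)) with hgdef
  have hgcont : Continuous g := by
    apply Continuous.mul
    · exact continuous_const.add (continuous_finset_sum _ fun i _ =>
        continuous_const.mul (continuous_apply i))
    · exact Real.continuous_exp.comp (Continuous.mul continuous_const
        (continuous_finset_sum _ fun i _ => ((continuous_apply i).mul (continuous_apply i))))
  have hφ : Measurable (Matrix.toLin' B) :=
    LinearMap.continuous_of_finiteDimensional (Matrix.toLin' B) |>.measurable
  have hmap := Real.map_matrix_volume_pi_eq_smul_volume_pi (M := B) hdetB_ne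
  have hkey : ∫ w : Fin k → ℝ, g (Matrix.toLin' B w) = |B.det⁻¹| * ∫ y, g y := by
    rw [← integral_map hφ.aemeasurable (hgcont.aestronglyMeasurable), hmap,
      integral_smul_measure, ENNReal.toReal_ofReal (abs_nonneg _), smul_eq_mul]
  have hpt : ∀ w : Fin k → ℝ, g (Matrix.toLin' B w)
      = (C + β ⬝ᵥ w) * Real.exp (-(1/2 : ℝ) * (w ⬝ᵥ M *ᵥ w)) := by
    intro w
    have hBw : Matrix.toLin' B w = B *ᵥ w := Matrix.toLin'_apply B w
    have h1 : γ ⬝ᵥ (B *ᵥ w) = β ⬝ᵥ w := by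
      rw [dotProduct_mulVec, ← mulVec_transpose, hBsymm, hγ, mulVec_mulVec, hBinv, one_mulVec]
    have h2 : (B *ᵥ w) ⬝ᵥ (B *ᵥ w) = w ⬝ᵥ M *ᵥ w := by
      rw [← hBB, ← mulVec_mulVec, dotProduct_mulVec w B (B *ᵥ w), ← mulVec_transpose, hBsymm]
    rw [hBw]
    show (C + γ ⬝ᵥ (B *ᵥ w)) * Real.exp (-(1/2 : ℝ) * ((B *ᵥ w) ⬝ᵥ (B *ᵥ w))) = _
    rw [h1, h2]
  calc ∫ w : Fin k → ℝ, (C + β ⬝ᵥ w) * Real.exp (-(1/2 : ℝ) * (w ⬝ᵥ M *ᵥ w))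
      = ∫ w : Fin k → ℝ, g (Matrix.toLin' B w) := by
        exact integral_congr_ae (Filter.Eventually.of_forall fun w => (hpt w).symm)
    _ = |B.det⁻¹| * ∫ y, g y := hkey
    _ = C * Real.sqrt (2 * Real.pi) ^ k * (Real.sqrt M.det)⁻¹ := by
        rw [hgdef, integral_std_gauss, hsqrtdet, abs_of_pos (by positivity)]
        ring

/-! ### Matrix algebra lemmas -/

lemma myVecMulVec_mulVec (u v w : Fin k → ℝ) :
    (vecMulVec u v) *ᵥ w = (v ⬝ᵥ w) • u := by
  funext i
  simp only [mulVec, dotProduct, vecMulVec_apply, Pi.smul_apply, smul_eq_mul]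
  rw [Finset.sum_mul]
  exact Finset.sum_congr rfl fun j _ => by ring

lemma quad_pos (Ωb : Matrix (Fin k) (Fin k) ℝ) (hΩ : Ωb.PosDef) {x : Fin k → ℝ}
    (hx : x ≠ 0) : 0 < x ⬝ᵥ Ωb *ᵥ x := by
  have h := hΩ.re_dotProduct_pos hx
  simpa using h

lemma quad_nonneg (Ωb : Matrix (Fin k) (Fin k) ℝ) (hΩ : Ωb.PosDef) (x : Fin k → ℝ) :
    0 ≤ x ⬝ᵥ Ωb *ᵥ x := by
  have h := hΩ.posSemidef.re_dotProduct_nonneg x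
  simpa using h

lemma M_posdef (Ωb : Matrix (Fin k) (Fin k) ℝ) (hΩ : Ωb.PosDef) (α : Fin k → ℝ) :
    (Ωb⁻¹ + vecMulVec α α).PosDef := by
  have hinv := hΩ.inv
  refine posDef_iff_dotProduct_mulVec.2 ⟨hinv.1.add ?_, fun x hx => ?_⟩
  · show (vecMulVec α α)ᴴ = vecMulVec α α
    ext i j
    simp [conjTranspose_apply, vecMulVec_apply, mul_comm]
  · have h1 := quad_pos Ωb⁻¹ hinv hx
    have h2 : x ⬝ᵥ (vecMulVec α α) *ᵥ x = (α ⬝ᵥ x) ^ 2 := by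
      rw [myVecMulVec_mulVec, dotProduct_smul, smul_eq_mul, dotProduct_comm]
      ring
    have h3 : (0:ℝ) ≤ (α ⬝ᵥ x) ^ 2 := sq_nonneg _
    simp only [star_trivial, RCLike.re_to_real]
    rw [add_mulVec, dotProduct_add, h2]
    linarith

lemma M_det (Ωb : Matrix (Fin k) (Fin k) ℝ) (hΩ : Ωb.PosDef) (α : Fin k → ℝ) :
    (Ωb⁻¹ + vecMulVec α α).det = Ωb.det⁻¹ * (1 + α ⬝ᵥ Ωb *ᵥ α) := by
  have hU : IsUnit Ωb.det := isUnit_iff_ne_zero.2 hΩ.det_pos.ne'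
  rw [vecMulVec_eq Unit]
  have hfact : Ωb⁻¹ + replicateCol Unit α * replicateRow Unit α
      = Ωb⁻¹ * (1 + Ωb * (replicateCol Unit α * replicateRow Unit α)) := by
    rw [Matrix.mul_add, Matrix.mul_one, ← Matrix.mul_assoc, nonsing_inv_mul _ hU,
      Matrix.one_mul]
  rw [hfact, det_mul, det_nonsing_inv, Ring.inverse_eq_inv']
  congr 1
  rw [← Matrix.mul_assoc, ← replicateCol_mulVec, det_one_add_replicateCol_mul_replicateRow]

lemma hpt_alg (x S Q1 Q2 Q3 Q4 A D Pt Pτ : ℝ) (hPt : Pt ≠ 0) (hE : Q1 * Q2 = Q3 * Q4) :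
    x * (S * Q2 / Pt) * (A * D * Q1 * Pt / Pτ) = A * D * S * Q4 / Pτ * (x * Q3) := by
  have h : x * (S * Q2 / Pt) * (A * D * Q1 * Pt / Pτ)
      = (x * S * A * D * (Q1 * Q2)) * (Pt / Pt) / Pτ := by ring
  rw [h, div_self hPt, mul_one, hE]; ring

/-! ### Main theorem -/

theorem esn_expectation_T_zeta1 {k : ℕ} (Ωb : Matrix (Fin k) (Fin k) ℝ) (hΩ : Ωb.PosDef)
    (hdiag : ∀ i, Ωb i i = 1) (α : Fin k → ℝ) (τ : ℝ)
    (α0 : ℝ) (hα0 : α0 = τ * Real.sqrt (1 + α ⬝ᵥ Ωb *ᵥ α))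
    (δ : Fin k → ℝ) (hδ : δ = (Real.sqrt (1 + α ⬝ᵥ Ωb *ᵥ α))⁻¹ • (Ωb *ᵥ α)) :
    ∫ z : Fin k → ℝ, (α0 + α ⬝ᵥ z) * zeta1 (α0 + α ⬝ᵥ z) * esnPdf Ωb α τ z =
      (α0 - τ * (α ⬝ᵥ δ)) * zeta1 τ / Real.sqrt (1 + α ⬝ᵥ Ωb *ᵥ α) := by
  classical
  set s := α ⬝ᵥ Ωb *ᵥ α with hsdef
  have hs0 : 0 ≤ s := quad_nonneg Ωb hΩ α
  have h1s : (0:ℝ) < 1 + s := by linarith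
  set c := Real.sqrt (1 + s) with hcdef
  have hcpos : 0 < c := Real.sqrt_pos.2 h1s
  have hc2 : c ^ 2 = 1 + s := Real.sq_sqrt h1s.le
  have hs' : s = c ^ 2 - 1 := by rw [hc2]; ring
  have hdetΩ : 0 < Ωb.det := hΩ.det_pos
  set M := Ωb⁻¹ + vecMulVec α α with hMdef
  have hMpos : M.PosDef := M_posdef Ωb hΩ α
  have hMdet : M.det = Ωb.det⁻¹ * (1 + s) := M_det Ωb hΩ α
  have hMsymm : Mᵀ = M := by
    have h := hMpos.1
    rwa [Matrix.IsHermitian, conjTranspose_eq_transpose_of_trivial] at h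
  set μ := (-(α0/(1+s))) • (Ωb *ᵥ α) with hμdef
  have hΩinv : Ωb⁻¹ *ᵥ (Ωb *ᵥ α) = α := by
    rw [mulVec_mulVec, nonsing_inv_mul _ (isUnit_iff_ne_zero.2 hdetΩ.ne'), one_mulVec]
  have hMμ : M *ᵥ μ = (-α0) • α := by
    rw [hμdef, mulVec_smul, hMdef, add_mulVec, hΩinv, myVecMulVec_mulVec, ← hsdef]
    funext i
    simp only [Pi.smul_apply, Pi.add_apply, smul_eq_mul]
    field_simp
  have hαμ : α ⬝ᵥ μ = -(α0/(1+s)) * s := by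
    rw [hμdef, dotProduct_smul, smul_eq_mul, ← hsdef]
  have hμα : μ ⬝ᵥ α = -(α0/(1+s)) * s := by rw [dotProduct_comm]; exact hαμ
  have hquad : ∀ z : Fin k → ℝ, (z - μ) ⬝ᵥ M *ᵥ (z - μ)
      = z ⬝ᵥ Ωb⁻¹ *ᵥ z + (α ⬝ᵥ z)^2 + 2*α0*(α ⬝ᵥ z) + α0^2*s/(1+s) := by
    intro z
    have hMz : z ⬝ᵥ M *ᵥ z = z ⬝ᵥ Ωb⁻¹ *ᵥ z + (α ⬝ᵥ z)^2 := by
      rw [hMdef, add_mulVec, dotProduct_add, myVecMulVec_mulVec, dotProduct_smul, smul_eq_mul,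
        dotProduct_comm z α]
      ring
    have hzMμ : z ⬝ᵥ M *ᵥ μ = -(α0 * (α ⬝ᵥ z)) := by
      rw [hMμ, dotProduct_smul, smul_eq_mul, dotProduct_comm z α]
      ring
    have hμMz : μ ⬝ᵥ M *ᵥ z = -(α0 * (α ⬝ᵥ z)) := by
      rw [dotProduct_mulVec, ← mulVec_transpose, hMsymm, hMμ, smul_dotProduct, smul_eq_mul]
      ring
    have hμMμ : μ ⬝ᵥ M *ᵥ μ = α0^2*s/(1+s) := by
      rw [hMμ, dotProduct_smul, smul_eq_mul, hμα]
      field_simp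
    rw [mulVec_sub, dotProduct_sub, sub_dotProduct, sub_dotProduct, hMz, hzMμ, hμMz, hμMμ]
    ring
  have hα02 : α0 ^ 2 = τ ^ 2 * (1 + s) := by rw [hα0, mul_pow, hc2]
  have hexpmul : ∀ z : Fin k → ℝ,
      Real.exp (-(1/2 : ℝ) * (z ⬝ᵥ Ωb⁻¹ *ᵥ z)) * Real.exp (-(α0 + α ⬝ᵥ z) ^ 2 / 2)
        = Real.exp (-(1/2 : ℝ) * ((z - μ) ⬝ᵥ M *ᵥ (z - μ))) * Real.exp (-τ ^ 2 / 2) := by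
    intro z
    rw [← Real.exp_add, ← Real.exp_add]
    congr 1
    rw [hquad z]
    rw [hα0, hs', show (1:ℝ) + (c ^ 2 - 1) = c ^ 2 from by ring]
    field_simp
    ring
  set K := (2 * Real.pi) ^ (-(k : ℝ) / 2) * Ωb.det ^ (-(1:ℝ)/2)
      * (Real.sqrt (2 * Real.pi))⁻¹ * Real.exp (-τ ^ 2 / 2) / Phi τ with hKdef
  have hpt : ∀ z : Fin k → ℝ, (α0 + α ⬝ᵥ z) * zeta1 (α0 + α ⬝ᵥ z) * esnPdf Ωb α τ z
      = K * ((α0 + α ⬝ᵥ z) * Real.exp (-(1/2 : ℝ) * ((z - μ) ⬝ᵥ M *ᵥ (z - μ)))) := by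
    intro z
    have hPt : Phi (α0 + α ⬝ᵥ z) ≠ 0 := (Phi_pos _).ne'
    have hPτ : Phi τ ≠ 0 := (Phi_pos τ).ne'
    have ht : τ * Real.sqrt (1 + α ⬝ᵥ Ωb *ᵥ α) + α ⬝ᵥ z = α0 + α ⬝ᵥ z := by
      rw [← hsdef, ← hcdef, ← hα0]
    rw [esnPdf, gaussPdf, ht, zeta1, phi, hKdef]
    exact hpt_alg _ _ _ _ _ _ _ _ _ _ hPt (hexpmul z)
  have h2π : (0:ℝ) < 2 * Real.pi := by positivity
  have hpow1 : (2 * Real.pi) ^ (-(k:ℝ)/2) = (Real.sqrt (2 * Real.pi) ^ k)⁻¹ := by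
    rw [Real.sqrt_eq_rpow, ← Real.rpow_natCast ((2 * Real.pi) ^ (1/(2:ℝ))) k,
      ← Real.rpow_mul h2π.le, ← Real.rpow_neg h2π.le]
    congr 1
    ring
  have hpow2 : Ωb.det ^ (-(1:ℝ)/2) = (Real.sqrt Ωb.det)⁻¹ := by
    rw [Real.sqrt_eq_rpow, ← Real.rpow_neg hdetΩ.le]
    congr 1
    ring
  have hMdetsqrt : Real.sqrt M.det = (Real.sqrt Ωb.det)⁻¹ * c := by
    rw [hMdet, Real.sqrt_mul (by positivity), Real.sqrt_inv, ← hcdef]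
  have hαδ : α ⬝ᵥ δ = c⁻¹ * s := by
    rw [hδ, dotProduct_smul, smul_eq_mul, ← hsdef]
  calc ∫ z : Fin k → ℝ, (α0 + α ⬝ᵥ z) * zeta1 (α0 + α ⬝ᵥ z) * esnPdf Ωb α τ z
      = ∫ z : Fin k → ℝ,
          K * ((α0 + α ⬝ᵥ z) * Real.exp (-(1/2 : ℝ) * ((z - μ) ⬝ᵥ M *ᵥ (z - μ)))) :=
        integral_congr_ae (Filter.Eventually.of_forall hpt)
    _ = K * ∫ z : Fin k → ℝ,
          (α0 + α ⬝ᵥ z) * Real.exp (-(1/2 : ℝ) * ((z - μ) ⬝ᵥ M *ᵥ (z - μ))) :=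
        integral_const_mul K _
    _ = K * ∫ w : Fin k → ℝ,
          ((α0 + α ⬝ᵥ μ) + α ⬝ᵥ w) * Real.exp (-(1/2 : ℝ) * (w ⬝ᵥ M *ᵥ w)) := by
        congr 1
        rw [← integral_add_right_eq_self
          (fun z => (α0 + α ⬝ᵥ z) * Real.exp (-(1/2 : ℝ) * ((z - μ) ⬝ᵥ M *ᵥ (z - μ)))) μ]
        refine integral_congr_ae (Filter.Eventually.of_forall fun w => ?_)
        simp only [add_sub_cancel_right, dotProduct_add]
        ring_nf
    _ = K * ((α0 + α ⬝ᵥ μ) * Real.sqrt (2 * Real.pi) ^ k * (Real.sqrt M.det)⁻¹) := by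
        rw [gauss_quad_integral M hMpos]
    _ = (α0 - τ * (α ⬝ᵥ δ)) * zeta1 τ / c := by
        rw [hKdef, hαμ, hαδ, hMdetsqrt, hpow1, hpow2, zeta1, phi, hα0, hs',
          show (1:ℝ) + (c ^ 2 - 1) = c ^ 2 from by ring]
        have hsq2π : (0:ℝ) < Real.sqrt (2 * Real.pi) := Real.sqrt_pos.2 h2π
        have hsqdet : (0:ℝ) < Real.sqrt Ωb.det := Real.sqrt_pos.2 hdetΩ
        have hPτ : Phi τ ≠ 0 := (Phi_pos τ).ne'
        field_simp
        ring
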